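/- Let D = (V, A) be a finite simple directed graph that is transitive (whenever (u,v) ∈ A and (v,w) ∈ A with u,v,w distinct, also (u,w) ∈ A, and D has no self-loops). Then any injective labeling λ : A → ℕ that assigns each arc of D a single distinct label gives a happy directed temporal graph whose strict reachability relation equals A. In particular, every transitive directed graph is realizable as the reachability graph of a happy directed temporal graph. -/
import Mathlib


/-- Strict temporal reachability: `SReach lab u v t` means there is a walk from `u` to `v`
whose steps carry strictly increasing labels, arriving at time `t`. -/
inductive SReach {V : Type*} (lab : V → V → Finset ℕ) : V → V → ℕ → Prop
  | single {u v : V} {t : ℕ} (h : t ∈ lab u v) : SReach lab u v t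
  | cons {u v w : V} {t t' : ℕ} (h : SReach lab u v t) (h' : t' ∈ lab v w) (hlt : t < t') :
      SReach lab u w t'

/-- `u` can reach `v` via a strict temporal path. -/
def StrictReachable {V : Type*} (lab : V → V → Finset ℕ) (u v : V) : Prop :=
  ∃ t, SReach lab u v t

/-- Non-strict temporal reachability: labels are non-decreasing along the walk. -/
inductive NSReach {V : Type*} (lab : V → V → Finset ℕ) : V → V → ℕ → Prop
  | single {u v : V} {t : ℕ} (h : t ∈ lab u v) : NSReach lab u v t
  | cons {u v w : V} {t t' : ℕ} (h : NSReach lab u v t) (h' : t' ∈ lab v w) (hle : t ≤ t') :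
      NSReach lab u w t'

/-- `u` can reach `v` via a non-strict temporal path. -/
def NonStrictReachable {V : Type*} (lab : V → V → Finset ℕ) (u v : V) : Prop :=
  ∃ t, NSReach lab u v t

/-- For a transitive simple digraph, any injective single labeling of its arcs yields a happy
directed temporal graph whose strict reachability relation equals the arc relation. -/
theorem stmt5 {V : Type*} (A : V → V → Prop) (lab : V → V → Finset ℕ)
    (hirr : ∀ x, ¬ A x x)
    (htrans : ∀ u v w, u ≠ w → A u v → A v w → A u w)
    (hone : ∀ u v, A u v → ∃ t, lab u v = {t})
    (hzero : ∀ u v, ¬ A u v → lab u v = ∅)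
    (hinj : ∀ u v x y t, t ∈ lab u v → t ∈ lab x y → u = x ∧ v = y) :
    ∀ u v, A u v ↔ u ≠ v ∧ StrictReachable lab u v := by
  have key : ∀ u v t, SReach lab u v t → u = v ∨ A u v := by
    intro u v t h
    induction h with
    | single h =>
      right
      by_contra hA
      rw [hzero _ _ hA] at h
      exact absurd h (Finset.notMem_empty _)
    | @cons v w t t' h h' hlt ih =>
      have hvw : A v w := by
        by_contra hA
        rw [hzero _ _ hA] at h'
        exact absurd h' (Finset.notMem_empty _)
      rcases ih with rfl | huv
      · right; exact hvw
      · by_cases huw : u = w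
        · exact Or.inl huw
        · exact Or.inr (htrans u v w huw huv hvw)
  intro u v
  constructor
  · intro hA
    have hne : u ≠ v := by rintro rfl; exact hirr u hA
    obtain ⟨t, ht⟩ := hone u v hA
    exact ⟨hne, t, SReach.single (by simp [ht])⟩
  · rintro ⟨hne, t, h⟩
    rcases key u v t h with rfl | hA
    · exact absurd rfl hne
    · exact hA
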